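/- If (φ₀, φ₁, φ₂) solves the minimal-surface ODE system with the standard initial conditions, then for all y ∈ ℝ: (φ₀'(y))² = (2n²m²/(n²+m²))φ₀(y)⁴ − (m²+n²)φ₀(y)² + (m²+n²)/2, (φ₁'(y))² = −2m²φ₁(y)⁴ + (2m²−n²)φ₁(y)² + (n²−m²)/2, and (φ₂'(y))² = −2n²φ₂(y)⁴ + (2n²−m²)φ₂(y)² + (m²−n²)/2. -/

import Mathlib

open Set

/-- Vector of first integrals / defect functions for the minimal-surface ODE system. -/
noncomputable def msF (n m : ℝ) (φ₀ φ₁ φ₂ : ℝ → ℝ) (y : ℝ) : Fin 8 → ℝ :=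
  ![φ₀ y ^ 2 + φ₁ y ^ 2 + φ₂ y ^ 2 - 1,
    2 * (φ₀ y * deriv φ₀ y) + 2 * (φ₁ y * deriv φ₁ y) + 2 * (φ₂ y * deriv φ₂ y),
    deriv φ₀ y ^ 2 + deriv φ₁ y ^ 2 + deriv φ₂ y ^ 2 - (m^2 * φ₁ y ^ 2 + n^2 * φ₂ y ^ 2),
    2*n^2 * φ₀ y ^ 2 + 2*(m^2+n^2) * φ₁ y ^ 2 - (m^2+n^2),
    4*n^2 * (φ₀ y * deriv φ₀ y) + 4*(m^2+n^2) * (φ₁ y * deriv φ₁ y),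
    deriv φ₀ y ^ 2 - (2*n^2*m^2/(n^2+m^2) * φ₀ y ^ 4 - (m^2+n^2) * φ₀ y ^ 2 + (m^2+n^2)/2),
    deriv φ₁ y ^ 2 - ((2*m^2-n^2) * φ₁ y ^ 2 - 2*m^2 * φ₁ y ^ 4 + (n^2-m^2)/2),
    deriv φ₂ y ^ 2 - ((2*n^2-m^2) * φ₂ y ^ 2 - 2*n^2 * φ₂ y ^ 4 + (m^2-n^2)/2)]

/-- Derivative of `msF` along solutions, written as a linear combination of components. -/
noncomputable def msD (n m : ℝ) (φ₀ φ₁ φ₂ : ℝ → ℝ) (y : ℝ) : Fin 8 → ℝ :=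
  ![1 * (2 * (φ₀ y * deriv φ₀ y) + 2 * (φ₁ y * deriv φ₁ y) + 2 * (φ₂ y * deriv φ₂ y)),
    2 * (deriv φ₀ y ^ 2 + deriv φ₁ y ^ 2 + deriv φ₂ y ^ 2 - (m^2 * φ₁ y ^ 2 + n^2 * φ₂ y ^ 2))
      + (-(4*(m^2 * φ₁ y ^ 2 + n^2 * φ₂ y ^ 2))) * (φ₀ y ^ 2 + φ₁ y ^ 2 + φ₂ y ^ 2 - 1),
    (-(2*(m^2 * φ₁ y ^ 2 + n^2 * φ₂ y ^ 2)))
      * (2 * (φ₀ y * deriv φ₀ y) + 2 * (φ₁ y * deriv φ₁ y) + 2 * (φ₂ y * deriv φ₂ y)),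
    1 * (4*n^2 * (φ₀ y * deriv φ₀ y) + 4*(m^2+n^2) * (φ₁ y * deriv φ₁ y)),
    4*n^2 * (deriv φ₀ y ^ 2 - (2*n^2*m^2/(n^2+m^2) * φ₀ y ^ 4 - (m^2+n^2) * φ₀ y ^ 2 + (m^2+n^2)/2))
      + 4*(m^2+n^2) * (deriv φ₁ y ^ 2 - ((2*m^2-n^2) * φ₁ y ^ 2 - 2*m^2 * φ₁ y ^ 4 + (n^2-m^2)/2))
      + (4*n^2*(2*m^2+n^2)/(m^2+n^2) * φ₀ y ^ 2 + 4*(n^2-2*m^2) * φ₁ y ^ 2 + (2*m^2-4*n^2))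
        * (2*n^2 * φ₀ y ^ 2 + 2*(m^2+n^2) * φ₁ y ^ 2 - (m^2+n^2))
      + (-(8*n^4 * φ₀ y ^ 2 + 8*n^2*(m^2+n^2) * φ₁ y ^ 2)) * (φ₀ y ^ 2 + φ₁ y ^ 2 + φ₂ y ^ 2 - 1),
    (2*(φ₀ y * deriv φ₀ y)*(n^2-m^2)/(n^2+m^2))
        * (2*n^2 * φ₀ y ^ 2 + 2*(m^2+n^2) * φ₁ y ^ 2 - (m^2+n^2))
      + (-(4*n^2*(φ₀ y * deriv φ₀ y))) * (φ₀ y ^ 2 + φ₁ y ^ 2 + φ₂ y ^ 2 - 1),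
    (2*(φ₁ y * deriv φ₁ y))
        * (2*n^2 * φ₀ y ^ 2 + 2*(m^2+n^2) * φ₁ y ^ 2 - (m^2+n^2))
      + (-(4*n^2*(φ₁ y * deriv φ₁ y))) * (φ₀ y ^ 2 + φ₁ y ^ 2 + φ₂ y ^ 2 - 1),
    (-(2*(φ₂ y * deriv φ₂ y)))
        * (2*n^2 * φ₀ y ^ 2 + 2*(m^2+n^2) * φ₁ y ^ 2 - (m^2+n^2))
      + (4*n^2*(φ₂ y * deriv φ₂ y)) * (φ₀ y ^ 2 + φ₁ y ^ 2 + φ₂ y ^ 2 - 1)]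

/-- A continuous coefficient bound for the linear system satisfied by `msF`. -/
noncomputable def msC (n m : ℝ) (φ₀ φ₁ φ₂ : ℝ → ℝ) (x : ℝ) : ℝ :=
  |(1:ℝ)| + |(2:ℝ)| + |(-(4*(m^2 * φ₁ x ^ 2 + n^2 * φ₂ x ^ 2)))|
    + |(-(2*(m^2 * φ₁ x ^ 2 + n^2 * φ₂ x ^ 2)))|
    + |4*n^2| + |4*(m^2+n^2)|
    + |4*n^2*(2*m^2+n^2)/(m^2+n^2) * φ₀ x ^ 2 + 4*(n^2-2*m^2) * φ₁ x ^ 2 + (2*m^2-4*n^2)|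
    + |(-(8*n^4 * φ₀ x ^ 2 + 8*n^2*(m^2+n^2) * φ₁ x ^ 2))|
    + |2*(φ₀ x * deriv φ₀ x)*(n^2-m^2)/(n^2+m^2)| + |(-(4*n^2*(φ₀ x * deriv φ₀ x)))|
    + |2*(φ₁ x * deriv φ₁ x)| + |(-(4*n^2*(φ₁ x * deriv φ₁ x)))|
    + |(-(2*(φ₂ x * deriv φ₂ x)))| + |4*n^2*(φ₂ x * deriv φ₂ x)|

lemma ms_lin1 {c1 x w C : ℝ} (hx : |x| ≤ w) (hC : |c1| ≤ C) : |c1 * x| ≤ C * w := by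
  have hw : 0 ≤ w := le_trans (abs_nonneg x) hx
  calc |c1 * x| = |c1| * |x| := abs_mul _ _
    _ ≤ C * w := mul_le_mul hC hx (abs_nonneg _) (le_trans (abs_nonneg _) hC)

lemma ms_lin2 {c1 c2 x y w C : ℝ} (hx : |x| ≤ w) (hy : |y| ≤ w)
    (hC : |c1| + |c2| ≤ C) : |c1 * x + c2 * y| ≤ C * w := by
  have hw : 0 ≤ w := le_trans (abs_nonneg x) hx
  calc |c1 * x + c2 * y| ≤ |c1 * x| + |c2 * y| := abs_add_le _ _
    _ = |c1| * |x| + |c2| * |y| := by rw [abs_mul, abs_mul]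
    _ ≤ |c1| * w + |c2| * w := by gcongr
    _ = (|c1| + |c2|) * w := by ring
    _ ≤ C * w := mul_le_mul_of_nonneg_right hC hw

lemma ms_lin4 {c1 c2 c3 c4 x1 x2 x3 x4 w C : ℝ} (h1 : |x1| ≤ w) (h2 : |x2| ≤ w)
    (h3 : |x3| ≤ w) (h4 : |x4| ≤ w) (hC : |c1| + |c2| + |c3| + |c4| ≤ C) :
    |c1 * x1 + c2 * x2 + c3 * x3 + c4 * x4| ≤ C * w := by
  have hw : 0 ≤ w := le_trans (abs_nonneg x1) h1
  calc |c1 * x1 + c2 * x2 + c3 * x3 + c4 * x4|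
      ≤ |c1 * x1 + c2 * x2 + c3 * x3| + |c4 * x4| := abs_add_le _ _
    _ ≤ |c1 * x1 + c2 * x2| + |c3 * x3| + |c4 * x4| := by
        gcongr; exact abs_add_le _ _
    _ ≤ |c1 * x1| + |c2 * x2| + |c3 * x3| + |c4 * x4| := by
        gcongr; exact abs_add_le _ _
    _ = |c1| * |x1| + |c2| * |x2| + |c3| * |x3| + |c4| * |x4| := by
        rw [abs_mul, abs_mul, abs_mul, abs_mul]
    _ ≤ |c1| * w + |c2| * w + |c3| * w + |c4| * w := by gcongr
    _ = (|c1| + |c2| + |c3| + |c4|) * w := by ring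
    _ ≤ C * w := mul_le_mul_of_nonneg_right hC hw

lemma ms_gronwall_zero_fwd {E : Type*} [NormedAddCommGroup E] [NormedSpace ℝ E]
    {f f' : ℝ → E} {c : ℝ → ℝ}
    (hd : ∀ t, HasDerivAt f (f' t) t) (hc : Continuous c)
    (hb : ∀ t, ‖f' t‖ ≤ c t * ‖f t‖) (h0 : f 0 = 0) :
    ∀ t, 0 ≤ t → f t = 0 := by
  intro t ht
  obtain ⟨K, hK⟩ := (isCompact_Icc (a := (0:ℝ)) (b := t)).exists_bound_of_continuousOn
    hc.continuousOn
  have key := norm_le_gronwallBound_of_norm_deriv_right_le (f := f) (f' := f')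
    (δ := 0) (K := K) (ε := 0) (a := 0) (b := t)
    (fun x _ => (hd x).continuousAt.continuousWithinAt)
    (fun x _ => (hd x).hasDerivWithinAt)
    (by simp [h0])
    (fun x hx => by
      have h2 : c x ≤ K := le_trans (le_abs_self _)
        (by simpa [Real.norm_eq_abs] using hK x (Ico_subset_Icc_self hx))
      calc ‖f' x‖ ≤ c x * ‖f x‖ := hb x
        _ ≤ K * ‖f x‖ := mul_le_mul_of_nonneg_right h2 (norm_nonneg _)
        _ = K * ‖f x‖ + 0 := by ring)
  have h3 := key t (right_mem_Icc.2 ht)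
  rw [gronwallBound_ε0] at h3
  simp only [zero_mul] at h3
  exact norm_le_zero_iff.1 h3

lemma ms_gronwall_zero {E : Type*} [NormedAddCommGroup E] [NormedSpace ℝ E]
    {f f' : ℝ → E} {c : ℝ → ℝ}
    (hd : ∀ t, HasDerivAt f (f' t) t) (hc : Continuous c)
    (hb : ∀ t, ‖f' t‖ ≤ c t * ‖f t‖) (h0 : f 0 = 0) :
    ∀ t, f t = 0 := by
  intro t
  rcases le_or_gt 0 t with ht | ht
  · exact ms_gronwall_zero_fwd hd hc hb h0 t ht
  · have hd' : ∀ s, HasDerivAt (fun s => f (-s)) ((-1 : ℝ) • f' (-s)) s := fun s =>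
      HasDerivAt.scomp s (hd (-s)) (hasDerivAt_neg s)
    have := ms_gronwall_zero_fwd (f := fun s => f (-s)) (f' := fun s => (-1 : ℝ) • f' (-s))
      (c := fun s => c (-s)) hd' (hc.comp continuous_neg)
      (fun s => by simpa using hb (-s)) (by simpa using h0) (-t) (by linarith)
    simpa using this

set_option maxHeartbeats 2000000 in
/-- The minimal-surface ODE system with standard initial conditions integrates to an
uncoupled system of first-order equations. -/
theorem stmt_10 (n m : ℝ) (hm : 0 < m) (hmn : m < n) (φ₀ φ₁ φ₂ : ℝ → ℝ)
    (hφ₀ : Differentiable ℝ φ₀) (hφ₀' : Differentiable ℝ (deriv φ₀))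
    (hφ₁ : Differentiable ℝ φ₁) (hφ₁' : Differentiable ℝ (deriv φ₁))
    (hφ₂ : Differentiable ℝ φ₂) (hφ₂' : Differentiable ℝ (deriv φ₂))
    (ode₀ : ∀ y, deriv (deriv φ₀) y =
      -2 * (m ^ 2 * φ₁ y ^ 2 + n ^ 2 * φ₂ y ^ 2) * φ₀ y)
    (ode₁ : ∀ y, deriv (deriv φ₁) y =
      (m ^ 2 - 2 * (m ^ 2 * φ₁ y ^ 2 + n ^ 2 * φ₂ y ^ 2)) * φ₁ y)
    (ode₂ : ∀ y, deriv (deriv φ₂) y =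
      (n ^ 2 - 2 * (m ^ 2 * φ₁ y ^ 2 + n ^ 2 * φ₂ y ^ 2)) * φ₂ y)
    (init₀ : φ₀ 0 = Real.sqrt ((n ^ 2 + m ^ 2) / (2 * n ^ 2)))
    (init₁ : φ₁ 0 = 0)
    (init₂ : φ₂ 0 = Real.sqrt ((n ^ 2 - m ^ 2) / (2 * n ^ 2)))
    (init₀' : deriv φ₀ 0 = 0)
    (init₁' : deriv φ₁ 0 = Real.sqrt ((n ^ 2 - m ^ 2) / 2))
    (init₂' : deriv φ₂ 0 = 0) :
    ∀ y : ℝ,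
      (deriv φ₀ y) ^ 2 = (2 * n ^ 2 * m ^ 2 / (n ^ 2 + m ^ 2)) * φ₀ y ^ 4
        - (m ^ 2 + n ^ 2) * φ₀ y ^ 2 + (m ^ 2 + n ^ 2) / 2 ∧
      (deriv φ₁ y) ^ 2 = -2 * m ^ 2 * φ₁ y ^ 4
        + (2 * m ^ 2 - n ^ 2) * φ₁ y ^ 2 + (n ^ 2 - m ^ 2) / 2 ∧
      (deriv φ₂ y) ^ 2 = -2 * n ^ 2 * φ₂ y ^ 4
        + (2 * n ^ 2 - m ^ 2) * φ₂ y ^ 2 + (m ^ 2 - n ^ 2) / 2 := by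
  have hn : 0 < n := hm.trans hmn
  have hT : (n^2+m^2) ≠ 0 := by positivity
  have hn2 : (n:ℝ)^2 ≠ 0 := by positivity
  have hnm : (0:ℝ) ≤ n^2 - m^2 := by nlinarith
  have Ha : ∀ y, HasDerivAt φ₀ (deriv φ₀ y) y := fun y => (hφ₀ y).hasDerivAt
  have Hb : ∀ y, HasDerivAt φ₁ (deriv φ₁ y) y := fun y => (hφ₁ y).hasDerivAt
  have Hc : ∀ y, HasDerivAt φ₂ (deriv φ₂ y) y := fun y => (hφ₂ y).hasDerivAt
  have Hp : ∀ y, HasDerivAt (deriv φ₀) (deriv (deriv φ₀) y) y := fun y => (hφ₀' y).hasDerivAt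
  have Hq : ∀ y, HasDerivAt (deriv φ₁) (deriv (deriv φ₁) y) y := fun y => (hφ₁' y).hasDerivAt
  have Hr : ∀ y, HasDerivAt (deriv φ₂) (deriv (deriv φ₂) y) y := fun y => (hφ₂' y).hasDerivAt
  -- componentwise derivatives
  have hd0 : ∀ y, HasDerivAt (fun y => msF n m φ₀ φ₁ φ₂ y 0) (msD n m φ₀ φ₁ φ₂ y 0) y := by
    intro y
    have H := ((((Ha y).pow 2).add ((Hb y).pow 2)).add ((Hc y).pow 2)).sub_const 1
    show HasDerivAt _ (1 * (2 * (φ₀ y * deriv φ₀ y) + 2 * (φ₁ y * deriv φ₁ y)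
      + 2 * (φ₂ y * deriv φ₂ y))) y
    refine H.congr_deriv ?_
    symm
    push_cast
    ring
  have hd1 : ∀ y, HasDerivAt (fun y => msF n m φ₀ φ₁ φ₂ y 1) (msD n m φ₀ φ₁ φ₂ y 1) y := by
    intro y
    have H := ((((Ha y).mul (Hp y)).const_mul 2).add (((Hb y).mul (Hq y)).const_mul 2)).add
      (((Hc y).mul (Hr y)).const_mul 2)
    show HasDerivAt _
      (2 * (deriv φ₀ y ^ 2 + deriv φ₁ y ^ 2 + deriv φ₂ y ^ 2
          - (m^2 * φ₁ y ^ 2 + n^2 * φ₂ y ^ 2))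
        + (-(4*(m^2 * φ₁ y ^ 2 + n^2 * φ₂ y ^ 2))) * (φ₀ y ^ 2 + φ₁ y ^ 2 + φ₂ y ^ 2 - 1)) y
    refine H.congr_deriv ?_
    symm
    rw [ode₀ y, ode₁ y, ode₂ y]
    ring
  have hd2 : ∀ y, HasDerivAt (fun y => msF n m φ₀ φ₁ φ₂ y 2) (msD n m φ₀ φ₁ φ₂ y 2) y := by
    intro y
    have H := ((((Hp y).pow 2).add ((Hq y).pow 2)).add ((Hr y).pow 2)).sub
      ((((Hb y).pow 2).const_mul (m^2)).add (((Hc y).pow 2).const_mul (n^2)))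
    show HasDerivAt _
      ((-(2*(m^2 * φ₁ y ^ 2 + n^2 * φ₂ y ^ 2)))
        * (2 * (φ₀ y * deriv φ₀ y) + 2 * (φ₁ y * deriv φ₁ y) + 2 * (φ₂ y * deriv φ₂ y))) y
    refine H.congr_deriv ?_
    symm
    rw [ode₀ y, ode₁ y, ode₂ y]
    push_cast
    ring
  have hd3 : ∀ y, HasDerivAt (fun y => msF n m φ₀ φ₁ φ₂ y 3) (msD n m φ₀ φ₁ φ₂ y 3) y := by
    intro y
    have H := ((((Ha y).pow 2).const_mul (2*n^2)).add
      (((Hb y).pow 2).const_mul (2*(m^2+n^2)))).sub_const (m^2+n^2)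
    show HasDerivAt _
      (1 * (4*n^2 * (φ₀ y * deriv φ₀ y) + 4*(m^2+n^2) * (φ₁ y * deriv φ₁ y))) y
    refine H.congr_deriv ?_
    symm
    push_cast
    ring
  have hd4 : ∀ y, HasDerivAt (fun y => msF n m φ₀ φ₁ φ₂ y 4) (msD n m φ₀ φ₁ φ₂ y 4) y := by
    intro y
    have H := (((Ha y).mul (Hp y)).const_mul (4*n^2)).add
      (((Hb y).mul (Hq y)).const_mul (4*(m^2+n^2)))
    show HasDerivAt _
      (4*n^2 * (deriv φ₀ y ^ 2
          - (2*n^2*m^2/(n^2+m^2) * φ₀ y ^ 4 - (m^2+n^2) * φ₀ y ^ 2 + (m^2+n^2)/2))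
        + 4*(m^2+n^2) * (deriv φ₁ y ^ 2
          - ((2*m^2-n^2) * φ₁ y ^ 2 - 2*m^2 * φ₁ y ^ 4 + (n^2-m^2)/2))
        + (4*n^2*(2*m^2+n^2)/(m^2+n^2) * φ₀ y ^ 2 + 4*(n^2-2*m^2) * φ₁ y ^ 2 + (2*m^2-4*n^2))
          * (2*n^2 * φ₀ y ^ 2 + 2*(m^2+n^2) * φ₁ y ^ 2 - (m^2+n^2))
        + (-(8*n^4 * φ₀ y ^ 2 + 8*n^2*(m^2+n^2) * φ₁ y ^ 2))
          * (φ₀ y ^ 2 + φ₁ y ^ 2 + φ₂ y ^ 2 - 1)) y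
    refine H.congr_deriv ?_
    symm
    rw [ode₀ y, ode₁ y]
    field_simp
    ring
  have hd5 : ∀ y, HasDerivAt (fun y => msF n m φ₀ φ₁ φ₂ y 5) (msD n m φ₀ φ₁ φ₂ y 5) y := by
    intro y
    have H := ((Hp y).pow 2).sub (((((Ha y).pow 4).const_mul (2*n^2*m^2/(n^2+m^2))).sub
      (((Ha y).pow 2).const_mul (m^2+n^2))).add_const ((m^2+n^2)/2))
    show HasDerivAt _
      ((2*(φ₀ y * deriv φ₀ y)*(n^2-m^2)/(n^2+m^2))
          * (2*n^2 * φ₀ y ^ 2 + 2*(m^2+n^2) * φ₁ y ^ 2 - (m^2+n^2))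
        + (-(4*n^2*(φ₀ y * deriv φ₀ y))) * (φ₀ y ^ 2 + φ₁ y ^ 2 + φ₂ y ^ 2 - 1)) y
    refine H.congr_deriv ?_
    symm
    rw [ode₀ y]
    field_simp
    ring
  have hd6 : ∀ y, HasDerivAt (fun y => msF n m φ₀ φ₁ φ₂ y 6) (msD n m φ₀ φ₁ φ₂ y 6) y := by
    intro y
    have H := ((Hq y).pow 2).sub (((((Hb y).pow 2).const_mul (2*m^2-n^2)).sub
      (((Hb y).pow 4).const_mul (2*m^2))).add_const ((n^2-m^2)/2))
    show HasDerivAt _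
      ((2*(φ₁ y * deriv φ₁ y))
          * (2*n^2 * φ₀ y ^ 2 + 2*(m^2+n^2) * φ₁ y ^ 2 - (m^2+n^2))
        + (-(4*n^2*(φ₁ y * deriv φ₁ y))) * (φ₀ y ^ 2 + φ₁ y ^ 2 + φ₂ y ^ 2 - 1)) y
    refine H.congr_deriv ?_
    symm
    rw [ode₁ y]
    push_cast
    ring
  have hd7 : ∀ y, HasDerivAt (fun y => msF n m φ₀ φ₁ φ₂ y 7) (msD n m φ₀ φ₁ φ₂ y 7) y := by
    intro y
    have H := ((Hr y).pow 2).sub (((((Hc y).pow 2).const_mul (2*n^2-m^2)).sub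
      (((Hc y).pow 4).const_mul (2*n^2))).add_const ((m^2-n^2)/2))
    show HasDerivAt _
      ((-(2*(φ₂ y * deriv φ₂ y)))
          * (2*n^2 * φ₀ y ^ 2 + 2*(m^2+n^2) * φ₁ y ^ 2 - (m^2+n^2))
        + (4*n^2*(φ₂ y * deriv φ₂ y)) * (φ₀ y ^ 2 + φ₁ y ^ 2 + φ₂ y ^ 2 - 1)) y
    refine H.congr_deriv ?_
    symm
    rw [ode₂ y]
    push_cast
    ring
  have hder : ∀ y, HasDerivAt (msF n m φ₀ φ₁ φ₂) (msD n m φ₀ φ₁ φ₂ y) y := by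
    intro y
    rw [hasDerivAt_pi]
    intro i
    fin_cases i
    · exact hd0 y
    · exact hd1 y
    · exact hd2 y
    · exact hd3 y
    · exact hd4 y
    · exact hd5 y
    · exact hd6 y
    · exact hd7 y
  -- norm bound
  have hcomp : ∀ x (i : Fin 8), |msF n m φ₀ φ₁ φ₂ x i| ≤ ‖msF n m φ₀ φ₁ φ₂ x‖ := fun x i => by
    simpa [Real.norm_eq_abs] using norm_le_pi_norm (msF n m φ₀ φ₁ φ₂ x) i
  have hbound : ∀ x, ‖msD n m φ₀ φ₁ φ₂ x‖ ≤ msC n m φ₀ φ₁ φ₂ x * ‖msF n m φ₀ φ₁ φ₂ x‖ := by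
    intro x
    have A1 := abs_nonneg (1:ℝ)
    have A2 := abs_nonneg (2:ℝ)
    have A3 := abs_nonneg (-(4*(m^2 * φ₁ x ^ 2 + n^2 * φ₂ x ^ 2)))
    have A4 := abs_nonneg (-(2*(m^2 * φ₁ x ^ 2 + n^2 * φ₂ x ^ 2)))
    have A5 := abs_nonneg (4*n^2)
    have A6 := abs_nonneg (4*(m^2+n^2))
    have A7 := abs_nonneg
      (4*n^2*(2*m^2+n^2)/(m^2+n^2) * φ₀ x ^ 2 + 4*(n^2-2*m^2) * φ₁ x ^ 2 + (2*m^2-4*n^2))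
    have A8 := abs_nonneg (-(8*n^4 * φ₀ x ^ 2 + 8*n^2*(m^2+n^2) * φ₁ x ^ 2))
    have A9 := abs_nonneg (2*(φ₀ x * deriv φ₀ x)*(n^2-m^2)/(n^2+m^2))
    have A10 := abs_nonneg (-(4*n^2*(φ₀ x * deriv φ₀ x)))
    have A11 := abs_nonneg (2*(φ₁ x * deriv φ₁ x))
    have A12 := abs_nonneg (-(4*n^2*(φ₁ x * deriv φ₁ x)))
    have A13 := abs_nonneg (-(2*(φ₂ x * deriv φ₂ x)))
    have A14 := abs_nonneg (4*n^2*(φ₂ x * deriv φ₂ x))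
    have hCpos : 0 ≤ msC n m φ₀ φ₁ φ₂ x := by
      simp only [msC]; positivity
    rw [pi_norm_le_iff_of_nonneg (mul_nonneg hCpos (norm_nonneg _))]
    intro i
    fin_cases i
    · exact ms_lin1 (hcomp x 1) (by simp only [msC]; linarith)
    · exact ms_lin2 (hcomp x 2) (hcomp x 0) (by simp only [msC]; linarith)
    · exact ms_lin1 (hcomp x 1) (by simp only [msC]; linarith)
    · exact ms_lin1 (hcomp x 4) (by simp only [msC]; linarith)
    · exact ms_lin4 (hcomp x 5) (hcomp x 6) (hcomp x 3) (hcomp x 0)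
        (by simp only [msC]; linarith)
    · exact ms_lin2 (hcomp x 3) (hcomp x 0) (by simp only [msC]; linarith)
    · exact ms_lin2 (hcomp x 3) (hcomp x 0) (by simp only [msC]; linarith)
    · exact ms_lin2 (hcomp x 3) (hcomp x 0) (by simp only [msC]; linarith)
  -- continuity of the coefficient bound
  have hca : Continuous φ₀ := hφ₀.continuous
  have hcb : Continuous φ₁ := hφ₁.continuous
  have hcc : Continuous φ₂ := hφ₂.continuous
  have hcp : Continuous (deriv φ₀) := hφ₀'.continuous
  have hcq : Continuous (deriv φ₁) := hφ₁'.continuous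
  have hcr : Continuous (deriv φ₂) := hφ₂'.continuous
  have hcont : Continuous (msC n m φ₀ φ₁ φ₂) := by
    unfold msC
    fun_prop
  -- initial conditions
  have h2nn : (0:ℝ) ≤ (n^2-m^2)/2 := by positivity
  have ha2 : φ₀ 0 ^ 2 = (n^2+m^2)/(2*n^2) := by
    rw [init₀]; exact Real.sq_sqrt (by positivity)
  have hc2 : φ₂ 0 ^ 2 = (n^2-m^2)/(2*n^2) := by
    rw [init₂]; exact Real.sq_sqrt (by positivity)
  have hq2 : deriv φ₁ 0 ^ 2 = (n^2-m^2)/2 := by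
    rw [init₁']; exact Real.sq_sqrt h2nn
  have ha4 : φ₀ 0 ^ 4 = ((n^2+m^2)/(2*n^2))^2 := by
    rw [show (4:ℕ) = 2*2 from rfl, pow_mul, ha2]
  have hc4 : φ₂ 0 ^ 4 = ((n^2-m^2)/(2*n^2))^2 := by
    rw [show (4:ℕ) = 2*2 from rfl, pow_mul, hc2]
  have hb4 : φ₁ 0 ^ 4 = 0 := by rw [init₁]; ring
  have hF0 : msF n m φ₀ φ₁ φ₂ 0 = 0 := by
    funext i
    fin_cases i
    · show φ₀ 0 ^ 2 + φ₁ 0 ^ 2 + φ₂ 0 ^ 2 - 1 = 0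
      rw [ha2, hc2, init₁]; field_simp; try ring
    · show 2 * (φ₀ 0 * deriv φ₀ 0) + 2 * (φ₁ 0 * deriv φ₁ 0) + 2 * (φ₂ 0 * deriv φ₂ 0) = 0
      rw [init₁, init₀', init₂']; ring
    · show deriv φ₀ 0 ^ 2 + deriv φ₁ 0 ^ 2 + deriv φ₂ 0 ^ 2
        - (m^2 * φ₁ 0 ^ 2 + n^2 * φ₂ 0 ^ 2) = 0
      rw [init₀', init₂', hq2, hc2, init₁]; field_simp; try ring
    · show 2*n^2 * φ₀ 0 ^ 2 + 2*(m^2+n^2) * φ₁ 0 ^ 2 - (m^2+n^2) = 0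
      rw [ha2, init₁]; field_simp; try ring
    · show 4*n^2 * (φ₀ 0 * deriv φ₀ 0) + 4*(m^2+n^2) * (φ₁ 0 * deriv φ₁ 0) = 0
      rw [init₀', init₁]; ring
    · show deriv φ₀ 0 ^ 2
        - (2*n^2*m^2/(n^2+m^2) * φ₀ 0 ^ 4 - (m^2+n^2) * φ₀ 0 ^ 2 + (m^2+n^2)/2) = 0
      rw [init₀', ha4, ha2]; field_simp; try ring
    · show deriv φ₁ 0 ^ 2 - ((2*m^2-n^2) * φ₁ 0 ^ 2 - 2*m^2 * φ₁ 0 ^ 4 + (n^2-m^2)/2) = 0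
      rw [hq2, hb4, init₁]; ring
    · show deriv φ₂ 0 ^ 2 - ((2*n^2-m^2) * φ₂ 0 ^ 2 - 2*n^2 * φ₂ 0 ^ 4 + (m^2-n^2)/2) = 0
      rw [init₂', hc4, hc2]; field_simp; try ring
  -- Grönwall: all the defect functions vanish identically
  have hzero := ms_gronwall_zero hder hcont hbound hF0
  intro y
  have h5 : deriv φ₀ y ^ 2
      - (2*n^2*m^2/(n^2+m^2) * φ₀ y ^ 4 - (m^2+n^2) * φ₀ y ^ 2 + (m^2+n^2)/2) = 0 :=
    congrFun (hzero y) 5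
  have h6 : deriv φ₁ y ^ 2
      - ((2*m^2-n^2) * φ₁ y ^ 2 - 2*m^2 * φ₁ y ^ 4 + (n^2-m^2)/2) = 0 :=
    congrFun (hzero y) 6
  have h7 : deriv φ₂ y ^ 2
      - ((2*n^2-m^2) * φ₂ y ^ 2 - 2*n^2 * φ₂ y ^ 4 + (m^2-n^2)/2) = 0 :=
    congrFun (hzero y) 7
  exact ⟨by linear_combination h5, by linear_combination h6, by linear_combination h7⟩
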